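/- Let $L \in (0,1)$ and let $X, X' \in \mathbb{R}^{n\times d}$ differ in one row. For $v, w \in [0,1]^n$ let $S_v = X^\top\mathrm{diag}(v)X$ and $S_w = (X')^\top\mathrm{diag}(w)X'$, and suppose $x_i^\top S_v^{-1}x_i \le L$ for all $i \in \mathrm{supp}(v)$ and $x'_j{}^\top S_w^{-1}x'_j \le L$ for all $j \in \mathrm{supp}(w)$. If $(1 + \|v - w\|_1)L \le 1/2$, then $S_v$ and $S_w$ are positive definite and $d_{\mathrm{PD}}(S_v, S_w) \le 2(2 + \|v-w\|_1)L$. -/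

import Mathlib

open Matrix
open scoped Classical

/-- Square root of a positive semidefinite matrix (junk value `0` otherwise). -/
noncomputable def msqrt {d : ℕ} (S : Matrix (Fin d) (Fin d) ℝ) :
    Matrix (Fin d) (Fin d) ℝ :=
  if h : S.PosSemidef then
    (h.1.eigenvectorUnitary : Matrix (Fin d) (Fin d) ℝ) *
      diagonal ((↑) ∘ Real.sqrt ∘ h.1.eigenvalues) *
      (star h.1.eigenvectorUnitary : Matrix (Fin d) (Fin d) ℝ)
  else 0

/-- The trace (nuclear) norm of a real matrix: `tr √(Mᵀ M)`. -/
noncomputable def traceNorm {d : ℕ} (M : Matrix (Fin d) (Fin d) ℝ) : ℝ :=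
  (msqrt (Mᵀ * M)).trace

/-- `d_PD(S₁,S₂) = max { ‖S₁^{-1/2} S₂ S₁^{-1/2} − I‖_tr , ‖S₂^{-1/2} S₁ S₂^{-1/2} − I‖_tr }`. -/
noncomputable def dPD {d : ℕ} (S₁ S₂ : Matrix (Fin d) (Fin d) ℝ) : ℝ :=
  max (traceNorm ((msqrt S₁)⁻¹ * S₂ * (msqrt S₁)⁻¹ - 1))
      (traceNorm ((msqrt S₂)⁻¹ * S₁ * (msqrt S₂)⁻¹ - 1))

/-- The square root of a positive semidefinite matrix (formerly in Mathlib). -/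
noncomputable abbrev Matrix.PosSemidef.sqrt {d : ℕ} {S : Matrix (Fin d) (Fin d) ℝ}
    (h : S.PosSemidef) : Matrix (Fin d) (Fin d) ℝ :=
  (h.1.eigenvectorUnitary : Matrix (Fin d) (Fin d) ℝ) *
      diagonal ((↑) ∘ Real.sqrt ∘ h.1.eigenvalues) *
      (star h.1.eigenvectorUnitary : Matrix (Fin d) (Fin d) ℝ)

open scoped MatrixOrder in
lemma Matrix.PosSemidef.sqrt_eq_cfcSqrt {d : ℕ} {S : Matrix (Fin d) (Fin d) ℝ}
    (h : S.PosSemidef) : h.sqrt = CFC.sqrt S := by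
  rw [CFC.sqrt_eq_cfc, cfc_nnreal_eq_real _ S h.nonneg, h.1.cfc_eq, IsHermitian.cfc,
    Unitary.conjStarAlgAut_apply]
  have key : (RCLike.ofReal ∘ (fun x => ((NNReal.sqrt x.toNNReal : ℝ))) ∘ h.1.eigenvalues : Fin d → ℝ)
      = ((↑) ∘ Real.sqrt ∘ h.1.eigenvalues) := by
    funext i
    simp only [Function.comp_apply, Real.coe_sqrt, Real.coe_toNNReal']
    rw [max_eq_left (h.eigenvalues_nonneg i)]
    rfl
  rw [key]

open scoped MatrixOrder in
lemma Matrix.PosSemidef.sqrt_mul_self {d : ℕ} {S : Matrix (Fin d) (Fin d) ℝ}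
    (h : S.PosSemidef) : h.sqrt * h.sqrt = S := by
  rw [h.sqrt_eq_cfcSqrt]
  exact CFC.sqrt_mul_sqrt_self S h.nonneg

open scoped MatrixOrder in
lemma Matrix.PosSemidef.posSemidef_sqrt {d : ℕ} {S : Matrix (Fin d) (Fin d) ℝ}
    (h : S.PosSemidef) : h.sqrt.PosSemidef := by
  rw [h.sqrt_eq_cfcSqrt]
  exact (CFC.sqrt_nonneg S).posSemidef

open scoped MatrixOrder in
lemma Matrix.PosSemidef.eq_sqrt_of_sq_eq {d : ℕ} {B S : Matrix (Fin d) (Fin d) ℝ}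
    (hB : B.PosSemidef) (h : S.PosSemidef) (hBS : B ^ 2 = S) : B = h.sqrt := by
  rw [h.sqrt_eq_cfcSqrt]
  exact ((CFC.sqrt_eq_iff S B h.nonneg hB.nonneg).mpr (by rw [← hBS, sq])).symm

lemma psd_trace_nonneg {d : ℕ} {A : Matrix (Fin d) (Fin d) ℝ} (hA : A.PosSemidef) :
    0 ≤ A.trace := by
  apply Finset.sum_nonneg
  intro i _
  have := hA.dotProduct_mulVec_nonneg (Pi.single i 1)
  simpa [dotProduct, Matrix.mulVec, Pi.single_apply, Finset.sum_ite_eq] using this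

lemma trace_mul_psd_nonneg {d : ℕ} {A B : Matrix (Fin d) (Fin d) ℝ}
    (hA : A.PosSemidef) (hB : B.PosSemidef) : 0 ≤ (A * B).trace := by
  have h2 : (hA.sqrt * B * hA.sqrt).trace = (A * B).trace := by
    rw [Matrix.trace_mul_comm, ← mul_assoc, hA.sqrt_mul_self]
  rw [← h2]
  have h3 : (hA.sqrt * B * hA.sqrt).PosSemidef := by
    have := hB.mul_mul_conjTranspose_same hA.sqrt
    rwa [hA.posSemidef_sqrt.1.eq] at this
  exact psd_trace_nonneg h3

lemma psd_cauchy_schwarz {d : ℕ} {S : Matrix (Fin d) (Fin d) ℝ} (hS : S.PosSemidef)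
    (u y : Fin d → ℝ) :
    (u ⬝ᵥ S *ᵥ y) ^ 2 ≤ (u ⬝ᵥ S *ᵥ u) * (y ⬝ᵥ S *ᵥ y) := by
  have hsymm : hS.sqrt ᵀ = hS.sqrt := by
    rw [← Matrix.conjTranspose_eq_transpose_of_trivial, hS.posSemidef_sqrt.1.eq]
  have key : ∀ a b : Fin d → ℝ, a ⬝ᵥ S *ᵥ b = (hS.sqrt *ᵥ a) ⬝ᵥ (hS.sqrt *ᵥ b) := by
    intro a b
    conv_lhs => rw [← hS.sqrt_mul_self]
    rw [← Matrix.mulVec_mulVec, Matrix.dotProduct_mulVec a, ← Matrix.mulVec_transpose, hsymm]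
  rw [key, key, key]
  have := Finset.sum_mul_sq_le_sq_mul_sq Finset.univ (hS.sqrt *ᵥ u) (hS.sqrt *ᵥ y)
  simpa [dotProduct, sq] using this


lemma traceNorm_sub_le {d : ℕ} {A B : Matrix (Fin d) (Fin d) ℝ}
    (hA : A.PosSemidef) (hB : B.PosSemidef) :
    traceNorm (A - B) ≤ A.trace + B.trace := by
  set M := A - B with hMdef
  have hM : M.IsHermitian := hA.1.sub hB.1
  set U : Matrix (Fin d) (Fin d) ℝ := (hM.eigenvectorUnitary : Matrix (Fin d) (Fin d) ℝ) with hUdef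
  set lam : Fin d → ℝ := hM.eigenvalues with hlamdef
  have hU1 : U * star U = 1 := Matrix.mem_unitaryGroup_iff.mp (hM.eigenvectorUnitary).2
  have hU2 : star U * U = 1 := Matrix.mem_unitaryGroup_iff'.mp (hM.eigenvectorUnitary).2
  set C : (Fin d → ℝ) → Matrix (Fin d) (Fin d) ℝ := fun f => U * diagonal f * star U with hCdef
  have hmid : ∀ Z : Matrix (Fin d) (Fin d) ℝ, star U * (U * Z) = Z := by
    intro Z; rw [← mul_assoc, hU2, one_mul]
  have hCmul : ∀ f g, C f * C g = C (fun i => f i * g i) := by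
    intro f g
    simp only [hCdef, mul_assoc, hmid]
    rw [← mul_assoc (diagonal f), Matrix.diagonal_mul_diagonal]
  have hCtr : ∀ f, (C f).trace = ∑ i, f i := by
    intro f
    simp only [hCdef]
    rw [Matrix.trace_mul_cycle, hU2, one_mul, Matrix.trace_diagonal]
  have hCpsd : ∀ f, (∀ i, 0 ≤ f i) → (C f).PosSemidef := by
    intro f hf
    have := (Matrix.PosSemidef.diagonal (R := ℝ) (n := Fin d) hf).mul_mul_conjTranspose_same U
    simpa [hCdef, Matrix.star_eq_conjTranspose] using this
  have hCone : C (fun _ => 1) = 1 := by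
    simp only [hCdef]
    rw [show Matrix.diagonal (fun _ => (1:ℝ)) = (1 : Matrix (Fin d) (Fin d) ℝ) from Matrix.diagonal_one, mul_one, hU1]
  have hspec : M = C lam := by
    have := hM.spectral_theorem
    rw [Unitary.conjStarAlgAut_apply] at this
    convert this using 2
    rfl
  set s : Fin d → ℝ := fun i => if 0 ≤ lam i then 1 else -1 with hsdef
  have hslam : (fun i => s i * lam i) = fun i => |lam i| := by
    funext i
    by_cases h : 0 ≤ lam i
    · simp [hsdef, h, abs_of_nonneg h]
    · simp [hsdef, h, abs_of_neg (lt_of_not_ge h)]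
  have hQpsd : (C fun i => |lam i|).PosSemidef := hCpsd _ (fun i => abs_nonneg _)
  have hMt : Mᵀ = M := by
    rw [← Matrix.conjTranspose_eq_transpose_of_trivial, hM.eq]
  have hMM : (Mᵀ * M).PosSemidef := by
    rw [← Matrix.conjTranspose_eq_transpose_of_trivial]
    exact Matrix.posSemidef_conjTranspose_mul_self M
  have hQsq : (C fun i => |lam i|) ^ 2 = Mᵀ * M := by
    rw [pow_two, hCmul, hMt]
    rw [hspec, hCmul]
    have habs2 : (fun i => |lam i| * |lam i|) = fun i => lam i * lam i :=
      funext fun i => abs_mul_abs_self (lam i)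
    rw [habs2]
  have hmsqrt : msqrt (Mᵀ * M) = C fun i => |lam i| := by
    rw [msqrt, dif_pos hMM]
    exact (hQpsd.eq_sqrt_of_sq_eq hMM hQsq).symm
  have htn : traceNorm M = ∑ i, |lam i| := by
    rw [traceNorm, hmsqrt, hCtr]
  have hCsub : ∀ f g, C f - C g = C (fun i => f i - g i) := by
    intro f g
    simp only [hCdef]
    rw [← Matrix.sub_mul, ← Matrix.mul_sub, Matrix.diagonal_sub]
  have hCadd : ∀ f g, C f + C g = C (fun i => f i + g i) := by
    intro f g
    simp only [hCdef]
    rw [← Matrix.add_mul, ← Matrix.mul_add, Matrix.diagonal_add]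
  have hs1 : (1 : Matrix (Fin d) (Fin d) ℝ) - C s = C (fun i => 1 - s i) := by
    rw [← hCone, hCsub]
  have hs2 : (1 : Matrix (Fin d) (Fin d) ℝ) + C s = C (fun i => 1 + s i) := by
    rw [← hCone, hCadd]
  have hsle : ∀ i, s i ≤ 1 ∧ -1 ≤ s i := by
    intro i
    by_cases h : 0 ≤ lam i <;> simp [hsdef, h]
  have h1 : 0 ≤ ((1 - C s) * A).trace := by
    apply trace_mul_psd_nonneg _ hA
    rw [hs1]
    exact hCpsd _ (fun i => by linarith [(hsle i).1])
  have h2 : 0 ≤ ((1 + C s) * B).trace := by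
    apply trace_mul_psd_nonneg _ hB
    rw [hs2]
    exact hCpsd _ (fun i => by linarith [(hsle i).2])
  rw [sub_mul, one_mul, Matrix.trace_sub] at h1
  rw [add_mul, one_mul, Matrix.trace_add] at h2
  have hCsM : (C s * M).trace = ∑ i, |lam i| := by
    rw [hspec, hCmul, hslam, hCtr]
  have hsplit : (C s * M).trace = (C s * A).trace - (C s * B).trace := by
    rw [hMdef, mul_sub, Matrix.trace_sub]
  rw [htn, ← hCsM, hsplit]
  linarith


lemma psd_quad_nonneg {d : ℕ} {S : Matrix (Fin d) (Fin d) ℝ} (hS : S.PosSemidef)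
    (u : Fin d → ℝ) : 0 ≤ u ⬝ᵥ S *ᵥ u := by
  simpa using hS.dotProduct_mulVec_nonneg u

lemma quad_vecMulVec {d : ℕ} (x u : Fin d → ℝ) :
    u ⬝ᵥ (vecMulVec x x) *ᵥ u = (x ⬝ᵥ u) ^ 2 := by
  simp only [dotProduct, Matrix.mulVec, Matrix.vecMulVec_apply, sq, Finset.mul_sum,
    Finset.sum_mul]
  refine Finset.sum_congr rfl fun a _ => Finset.sum_congr rfl fun b _ => by ring

lemma quad_sum {n d : ℕ} (c : Fin n → ℝ) (y : Fin n → (Fin d → ℝ)) (u : Fin d → ℝ) :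
    u ⬝ᵥ (∑ i, c i • vecMulVec (y i) (y i)) *ᵥ u = ∑ i, c i * (y i ⬝ᵥ u) ^ 2 := by
  have h1 : (∑ i, c i • vecMulVec (y i) (y i)) *ᵥ u
      = ∑ i, c i • (vecMulVec (y i) (y i) *ᵥ u) := by
    ext a
    simp only [Matrix.mulVec, dotProduct, Finset.sum_apply, Matrix.sum_apply,
      Matrix.smul_apply, Pi.smul_apply, smul_eq_mul, Finset.sum_mul, Finset.mul_sum,
      Matrix.vecMulVec_apply]
    rw [Finset.sum_comm]
    refine Finset.sum_congr rfl fun i _ => Finset.sum_congr rfl fun b _ => by ring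
  have h2 : ∀ g : Fin n → (Fin d → ℝ), u ⬝ᵥ (∑ i, g i) = ∑ i, u ⬝ᵥ g i := by
    intro g
    simp only [dotProduct, Finset.sum_apply, Finset.mul_sum]
    rw [Finset.sum_comm]
  rw [h1, h2]
  refine Finset.sum_congr rfl fun i _ => ?_
  rw [dotProduct_smul, ← quad_vecMulVec (y i) u]
  simp

lemma herm_sum {n d : ℕ} (c : Fin n → ℝ) (y : Fin n → (Fin d → ℝ)) :
    (∑ i, c i • vecMulVec (y i) (y i)).IsHermitian := by
  show _ = _
  ext a b
  simp only [Matrix.conjTranspose_apply, Matrix.sum_apply, Matrix.smul_apply,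
    Matrix.vecMulVec_apply, smul_eq_mul, star_trivial]
  exact Finset.sum_congr rfl fun i _ => by ring

lemma psd_sum {n d : ℕ} (c : Fin n → ℝ) (y : Fin n → (Fin d → ℝ)) (hc : ∀ i, 0 ≤ c i) :
    (∑ i, c i • vecMulVec (y i) (y i)).PosSemidef := by
  refine .of_dotProduct_mulVec_nonneg (herm_sum c y) fun u => ?_
  have hu : star u = u := by simp
  rw [hu, quad_sum]
  exact Finset.sum_nonneg fun i _ => mul_nonneg (hc i) (sq_nonneg _)

lemma trace_vecMulVec_mul {d : ℕ} (x : Fin d → ℝ) (T : Matrix (Fin d) (Fin d) ℝ) :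
    (vecMulVec x x * T).trace = x ⬝ᵥ T *ᵥ x := by
  simp only [Matrix.trace, Matrix.diag_apply, Matrix.mul_apply, Matrix.vecMulVec_apply,
    dotProduct, Matrix.mulVec, Finset.mul_sum]
  rw [Finset.sum_comm]
  refine Finset.sum_congr rfl fun a _ => Finset.sum_congr rfl fun b _ => by ring

lemma trace_sum_mul {n d : ℕ} (c : Fin n → ℝ) (y : Fin n → (Fin d → ℝ))
    (T : Matrix (Fin d) (Fin d) ℝ) :
    ((∑ i, c i • vecMulVec (y i) (y i)) * T).trace = ∑ i, c i * (y i ⬝ᵥ T *ᵥ y i) := by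
  rw [Matrix.sum_mul, Matrix.trace_sum]
  refine Finset.sum_congr rfl fun i _ => ?_
  rw [smul_mul_assoc, Matrix.trace_smul, trace_vecMulVec_mul]
  simp

lemma gram_repr {n d : ℕ} (Y : Matrix (Fin n) (Fin d) ℝ) (a : Fin n → ℝ) :
    Yᵀ * Matrix.diagonal a * Y = ∑ i, a i • vecMulVec (Y i) (Y i) := by
  ext p q
  simp only [Matrix.mul_apply, Matrix.transpose_apply, Matrix.diagonal_apply, Matrix.sum_apply,
    Matrix.smul_apply, Matrix.vecMulVec_apply, smul_eq_mul, ite_mul, zero_mul, mul_ite, mul_zero,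
    Finset.sum_mul]
  refine Finset.sum_congr rfl fun i _ => ?_
  rw [Finset.sum_ite_eq' Finset.univ i (fun x => Y x p * a x * Y i q)]
  simp only [Finset.mem_univ, if_true]
  ring

lemma inv_vec_quad {d : ℕ} {S : Matrix (Fin d) (Fin d) ℝ} (hS : S.IsHermitian)
    (hdet : IsUnit S.det) (x u : Fin d → ℝ) :
    (S⁻¹ *ᵥ x) ⬝ᵥ S *ᵥ u = x ⬝ᵥ u := by
  rw [Matrix.dotProduct_mulVec]
  congr 1
  rw [← Matrix.mulVec_transpose, ← Matrix.conjTranspose_eq_transpose_of_trivial, hS.eq,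
      Matrix.mulVec_mulVec, Matrix.mul_nonsing_inv _ hdet, Matrix.one_mulVec]

lemma lev_bound {d : ℕ} {S : Matrix (Fin d) (Fin d) ℝ} (hS : S.PosDef) {x : Fin d → ℝ} {L : ℝ}
    (hx : x ⬝ᵥ S⁻¹ *ᵥ x ≤ L) (u : Fin d → ℝ) :
    (x ⬝ᵥ u) ^ 2 ≤ L * (u ⬝ᵥ S *ᵥ u) := by
  have hdet : IsUnit S.det := isUnit_iff_ne_zero.mpr (ne_of_gt hS.det_pos)
  have h1 : (S⁻¹ *ᵥ x) ⬝ᵥ S *ᵥ u = x ⬝ᵥ u := inv_vec_quad hS.1 hdet x u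
  have h2 : (S⁻¹ *ᵥ x) ⬝ᵥ S *ᵥ (S⁻¹ *ᵥ x) = x ⬝ᵥ S⁻¹ *ᵥ x := inv_vec_quad hS.1 hdet x _
  have hcs := psd_cauchy_schwarz hS.posSemidef (S⁻¹ *ᵥ x) u
  rw [h1, h2] at hcs
  have hq : 0 ≤ u ⬝ᵥ S *ᵥ u := psd_quad_nonneg hS.posSemidef u
  nlinarith [hcs, hq, hx]

lemma posdef_of_gram {n d : ℕ} (X : Matrix (Fin n) (Fin d) ℝ) (v : Fin n → ℝ)
    (hv : ∀ i, 0 ≤ v i) (hdet : IsUnit (Xᵀ * Matrix.diagonal v * X).det) :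
    (Xᵀ * Matrix.diagonal v * X).PosDef := by
  have hpsd : (Xᵀ * Matrix.diagonal v * X).PosSemidef := by
    have := (Matrix.PosSemidef.diagonal
      (fun i => hv i : (0:Fin n → ℝ) ≤ v)).conjTranspose_mul_mul_same X
    rwa [Matrix.conjTranspose_eq_transpose_of_trivial] at this
  refine .of_dotProduct_mulVec_pos hpsd.1 fun x hx => ?_
  rcases lt_or_eq_of_le (hpsd.dotProduct_mulVec_nonneg x) with h | h
  · exact h
  · exfalso
    have h0 : (Xᵀ * Matrix.diagonal v * X) *ᵥ x = 0 :=
      (hpsd.dotProduct_mulVec_zero_iff x).mp h.symm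
    have hx0 : x = 0 := by
      have := congrArg (fun y => (Xᵀ * Matrix.diagonal v * X)⁻¹ *ᵥ y) h0
      simpa [Matrix.mulVec_mulVec, Matrix.nonsing_inv_mul _ hdet] using this
    exact hx hx0

lemma traceNorm_side {n d : ℕ} (X X' : Matrix (Fin n) (Fin d) ℝ)
    (L : ℝ) (hL0 : 0 < L)
    (i₀ : Fin n) (hadj : ∀ i, i ≠ i₀ → X i = X' i)
    (v w : Fin n → ℝ)
    (hv01 : ∀ i, 0 ≤ v i ∧ v i ≤ 1) (hw01 : ∀ i, 0 ≤ w i ∧ w i ≤ 1)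
    (hinvv : IsUnit (Xᵀ * Matrix.diagonal v * X).det)
    (hinvw : IsUnit (X'ᵀ * Matrix.diagonal w * X').det)
    (hlevv : ∀ i, v i ≠ 0 → X i ⬝ᵥ ((Xᵀ * Matrix.diagonal v * X)⁻¹ *ᵥ X i) ≤ L)
    (hlevw : ∀ i, w i ≠ 0 → X' i ⬝ᵥ ((X'ᵀ * Matrix.diagonal w * X')⁻¹ *ᵥ X' i) ≤ L)
    (hsmall : (1 + ∑ i, |v i - w i|) * L ≤ 1 / 2) :
    traceNorm ((msqrt (Xᵀ * Matrix.diagonal v * X))⁻¹ * (X'ᵀ * Matrix.diagonal w * X') *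
        (msqrt (Xᵀ * Matrix.diagonal v * X))⁻¹ - 1)
      ≤ 2 * (2 + ∑ i, |v i - w i|) * L := by
  set S₁ := Xᵀ * Matrix.diagonal v * X with hS₁
  set S₂ := X'ᵀ * Matrix.diagonal w * X' with hS₂
  set K := ∑ i, |v i - w i| with hK
  have hK0 : 0 ≤ K := Finset.sum_nonneg fun i _ => abs_nonneg _
  have hpd₁ : S₁.PosDef := posdef_of_gram X v (fun i => (hv01 i).1) hinvv
  have hpd₂ : S₂.PosDef := posdef_of_gram X' w (fun i => (hw01 i).1) hinvw
  have hpsd₁ := hpd₁.posSemidef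
  have hpsd₂ := hpd₂.posSemidef
  set p : Fin n → ℝ := fun i => if i = i₀ then w i₀ else max (w i - v i) 0 with hp
  set q : Fin n → ℝ := fun i => if i = i₀ then v i₀ else max (v i - w i) 0 with hq
  have hp0 : ∀ i, 0 ≤ p i := by
    intro i
    by_cases h : i = i₀ <;> simp [hp, h, (hw01 i₀).1, le_max_right]
  have hq0 : ∀ i, 0 ≤ q i := by
    intro i
    by_cases h : i = i₀ <;> simp [hq, h, (hv01 i₀).1, le_max_right]
  set P := ∑ i, p i • vecMulVec (X' i) (X' i) with hPdef
  set N := ∑ i, q i • vecMulVec (X i) (X i) with hNdef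
  have hrepr₁ : S₁ = ∑ i, v i • vecMulVec (X i) (X i) := gram_repr X v
  have hrepr₂ : S₂ = ∑ i, w i • vecMulVec (X' i) (X' i) := gram_repr X' w
  have hsub : S₂ - S₁ = P - N := by
    rw [hrepr₁, hrepr₂, hPdef, hNdef, ← Finset.sum_sub_distrib, ← Finset.sum_sub_distrib]
    refine Finset.sum_congr rfl fun i _ => ?_
    by_cases h : i = i₀
    · subst h; simp [hp, hq]
    · simp only [hp, hq, if_neg h]
      rw [← hadj i h, ← sub_smul, ← sub_smul]
      congr 1
      rcases le_total (v i) (w i) with hle | hle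
      · rw [max_eq_left (by linarith), max_eq_right (by linarith)]; ring
      · rw [max_eq_right (by linarith), max_eq_left (by linarith)]; ring
  have hqP : ∀ u, u ⬝ᵥ P *ᵥ u = ∑ i, p i * (X' i ⬝ᵥ u) ^ 2 := fun u => by
    rw [hPdef]; exact quad_sum _ _ u
  have hqN : ∀ u, u ⬝ᵥ N *ᵥ u = ∑ i, q i * (X i ⬝ᵥ u) ^ 2 := fun u => by
    rw [hNdef]; exact quad_sum _ _ u
  have hpw : ∀ i, p i ≠ 0 → w i ≠ 0 := by
    intro i hne
    by_cases h : i = i₀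
    · subst h; simpa [hp] using hne
    · simp only [hp, if_neg h] at hne
      have hgt : 0 < w i - v i := by
        rcases lt_or_ge 0 (w i - v i) with h1 | h1
        · exact h1
        · exact absurd (max_eq_right h1) hne
      have := (hv01 i).1
      exact ne_of_gt (by linarith)
  have hqv : ∀ i, q i ≠ 0 → v i ≠ 0 := by
    intro i hne
    by_cases h : i = i₀
    · subst h; simpa [hq] using hne
    · simp only [hq, if_neg h] at hne
      have hgt : 0 < v i - w i := by
        rcases lt_or_ge 0 (v i - w i) with h1 | h1
        · exact h1
        · exact absurd (max_eq_right h1) hne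
      have := (hw01 i).1
      exact ne_of_gt (by linarith)
  have hlevP : ∀ i, p i ≠ 0 → ∀ u, (X' i ⬝ᵥ u) ^ 2 ≤ L * (u ⬝ᵥ S₂ *ᵥ u) :=
    fun i hi u => lev_bound hpd₂ (hlevw i (hpw i hi)) u
  have hlevN : ∀ i, q i ≠ 0 → ∀ u, (X i ⬝ᵥ u) ^ 2 ≤ L * (u ⬝ᵥ S₁ *ᵥ u) :=
    fun i hi u => lev_bound hpd₁ (hlevv i (hqv i hi)) u
  set α := ∑ i, p i with hα
  set β := ∑ i, q i with hβ
  have hα0 : 0 ≤ α := Finset.sum_nonneg fun i _ => hp0 i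
  have hβ0 : 0 ≤ β := Finset.sum_nonneg fun i _ => hq0 i
  have hαK : α ≤ 1 + K := by
    have hbound : ∀ i, p i ≤ (if i = i₀ then (1:ℝ) else 0) + |v i - w i| := by
      intro i
      by_cases h : i = i₀
      · subst h
        simp only [hp, if_pos rfl, if_true, eq_self_iff_true]
        have h1 := (hw01 i).2
        have h2 := abs_nonneg (v i - w i)
        linarith
      · simp only [hp, if_neg h, zero_add]
        apply max_le
        · rw [abs_sub_comm]; exact le_abs_self _
        · exact abs_nonneg _
    calc α ≤ ∑ i, ((if i = i₀ then (1:ℝ) else 0) + |v i - w i|) :=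
          Finset.sum_le_sum fun i _ => hbound i
      _ = 1 + K := by
          rw [Finset.sum_add_distrib, Finset.sum_ite_eq' Finset.univ i₀ (fun _ => (1:ℝ))]
          simp [hK]
  have hαβ : α + β ≤ 2 + K := by
    have hbound : ∀ i, p i + q i ≤ (if i = i₀ then (2:ℝ) else 0) + |v i - w i| := by
      intro i
      by_cases h : i = i₀
      · subst h
        simp only [hp, hq, if_pos rfl, if_true, eq_self_iff_true]
        have h1 := (hw01 i).2
        have h2 := (hv01 i).2
        have h3 := abs_nonneg (v i - w i)
        linarith
      · simp only [hp, hq, if_neg h, zero_add]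
        rcases le_total (v i) (w i) with hle | hle
        · rw [max_eq_left (by linarith), max_eq_right (by linarith), abs_sub_comm,
            abs_of_nonneg (by linarith)]
          linarith
        · rw [max_eq_right (by linarith), max_eq_left (by linarith),
            abs_of_nonneg (by linarith)]
          linarith
    calc α + β = ∑ i, (p i + q i) := by rw [Finset.sum_add_distrib]
      _ ≤ ∑ i, ((if i = i₀ then (2:ℝ) else 0) + |v i - w i|) :=
          Finset.sum_le_sum fun i _ => hbound i
      _ = 2 + K := by
          rw [Finset.sum_add_distrib, Finset.sum_ite_eq' Finset.univ i₀ (fun _ => (2:ℝ))]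
          simp [hK]
  have hPle : ∀ u, u ⬝ᵥ P *ᵥ u ≤ α * L * (u ⬝ᵥ S₂ *ᵥ u) := by
    intro u
    rw [hqP]
    have hterm : ∀ i, p i * (X' i ⬝ᵥ u) ^ 2 ≤ p i * (L * (u ⬝ᵥ S₂ *ᵥ u)) := by
      intro i
      by_cases h : p i = 0
      · simp [h]
      · exact mul_le_mul_of_nonneg_left (hlevP i h u) (hp0 i)
    calc ∑ i, p i * (X' i ⬝ᵥ u) ^ 2 ≤ ∑ i, p i * (L * (u ⬝ᵥ S₂ *ᵥ u)) :=
          Finset.sum_le_sum fun i _ => hterm i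
      _ = α * L * (u ⬝ᵥ S₂ *ᵥ u) := by rw [← Finset.sum_mul]; ring
  have hNle : ∀ u, u ⬝ᵥ N *ᵥ u ≤ β * L * (u ⬝ᵥ S₁ *ᵥ u) := by
    intro u
    rw [hqN]
    have hterm : ∀ i, q i * (X i ⬝ᵥ u) ^ 2 ≤ q i * (L * (u ⬝ᵥ S₁ *ᵥ u)) := by
      intro i
      by_cases h : q i = 0
      · simp [h]
      · exact mul_le_mul_of_nonneg_left (hlevN i h u) (hq0 i)
    calc ∑ i, q i * (X i ⬝ᵥ u) ^ 2 ≤ ∑ i, q i * (L * (u ⬝ᵥ S₁ *ᵥ u)) :=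
          Finset.sum_le_sum fun i _ => hterm i
      _ = β * L * (u ⬝ᵥ S₁ *ᵥ u) := by rw [← Finset.sum_mul]; ring
  have hαL : α * L ≤ 1 / 2 :=
    le_trans (mul_le_mul_of_nonneg_right hαK hL0.le) hsmall
  have hdiffq : ∀ u, u ⬝ᵥ S₂ *ᵥ u - u ⬝ᵥ S₁ *ᵥ u = u ⬝ᵥ P *ᵥ u - u ⬝ᵥ N *ᵥ u := by
    intro u
    have := congrArg (fun M => u ⬝ᵥ M *ᵥ u) hsub
    simpa [Matrix.sub_mulVec, dotProduct_sub] using this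
  have hcmp : ∀ u, u ⬝ᵥ S₂ *ᵥ u ≤ 2 * (u ⬝ᵥ S₁ *ᵥ u) := by
    intro u
    have h1 := hPle u
    have hN0 : 0 ≤ u ⬝ᵥ N *ᵥ u := by
      rw [hqN]
      exact Finset.sum_nonneg fun i _ => mul_nonneg (hq0 i) (sq_nonneg _)
    have hq2 : 0 ≤ u ⬝ᵥ S₂ *ᵥ u := psd_quad_nonneg hpsd₂ u
    have hd := hdiffq u
    nlinarith [h1, hN0, hq2, hαL, hd]
  have hdet₁ : IsUnit S₁.det := hinvv
  have hcross : ∀ i, p i ≠ 0 → X' i ⬝ᵥ S₁⁻¹ *ᵥ X' i ≤ 2 * L := by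
    intro i hi
    set x := X' i with hx
    set u := S₁⁻¹ *ᵥ x with hu
    have e1 : u ⬝ᵥ S₁ *ᵥ u = x ⬝ᵥ u := inv_vec_quad hpd₁.1 hdet₁ x u
    have e2 : (x ⬝ᵥ u) ^ 2 ≤ L * (u ⬝ᵥ S₂ *ᵥ u) := hlevP i hi u
    have e3 : u ⬝ᵥ S₂ *ᵥ u ≤ 2 * (u ⬝ᵥ S₁ *ᵥ u) := hcmp u
    have e4 : 0 ≤ x ⬝ᵥ u := psd_quad_nonneg hpd₁.inv.posSemidef x
    have e5 : (x ⬝ᵥ u) ^ 2 ≤ 2 * L * (x ⬝ᵥ u) := by nlinarith [mul_le_mul_of_nonneg_left e3 hL0.le]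
    nlinarith [e5, e4, hL0]
  have hdirect : ∀ i, q i ≠ 0 → X i ⬝ᵥ S₁⁻¹ *ᵥ X i ≤ L := fun i hi => hlevv i (hqv i hi)
  -- square root manipulations
  have hmsq : msqrt S₁ = hpsd₁.sqrt := by rw [msqrt, dif_pos hpsd₁]
  set Q := hpsd₁.sqrt with hQ
  have hQherm : Qᴴ = Q := hpsd₁.posSemidef_sqrt.1
  have hQQS : Q * Q = S₁ := hpsd₁.sqrt_mul_self
  have hQdet : IsUnit Q.det := by
    have hdd : Q.det * Q.det = S₁.det := by rw [← Matrix.det_mul, hQQS]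
    exact isUnit_of_mul_isUnit_left (hdd ▸ hdet₁)
  set R := Q⁻¹ with hR
  have hRQ : R * Q = 1 := Matrix.nonsing_inv_mul Q hQdet
  have hQR : Q * R = 1 := Matrix.mul_nonsing_inv Q hQdet
  have hRherm : Rᴴ = R := by rw [hR, Matrix.conjTranspose_nonsing_inv, hQherm]
  have hRR : R * R = S₁⁻¹ := by rw [hR, ← Matrix.mul_inv_rev, hQQS]
  have hRSR : R * S₁ * R = 1 := by
    rw [← hQQS, ← mul_assoc, hRQ, one_mul, hQR]
  have hM1 : (msqrt S₁)⁻¹ * S₂ * (msqrt S₁)⁻¹ - 1 = R * P * R - R * N * R := by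
    rw [hmsq, ← hR]
    calc R * S₂ * R - 1 = R * S₂ * R - R * S₁ * R := by rw [hRSR]
      _ = R * (S₂ - S₁) * R := by rw [Matrix.mul_sub, Matrix.sub_mul]
      _ = R * (P - N) * R := by rw [hsub]
      _ = R * P * R - R * N * R := by rw [Matrix.mul_sub, Matrix.sub_mul]
  have hPpsd : P.PosSemidef := hPdef ▸ psd_sum p (fun i => X' i) hp0
  have hNpsd : N.PosSemidef := hNdef ▸ psd_sum q (fun i => X i) hq0
  have hA1 : (R * P * R).PosSemidef := by
    have := hPpsd.mul_mul_conjTranspose_same R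
    rwa [hRherm] at this
  have hB1 : (R * N * R).PosSemidef := by
    have := hNpsd.mul_mul_conjTranspose_same R
    rwa [hRherm] at this
  have htrA : (R * P * R).trace = ∑ i, p i * (X' i ⬝ᵥ S₁⁻¹ *ᵥ X' i) := by
    rw [Matrix.trace_mul_comm (R * P) R, ← mul_assoc, hRR, Matrix.trace_mul_comm, hPdef]
    exact trace_sum_mul _ _ _
  have htrB : (R * N * R).trace = ∑ i, q i * (X i ⬝ᵥ S₁⁻¹ *ᵥ X i) := by
    rw [Matrix.trace_mul_comm (R * N) R, ← mul_assoc, hRR, Matrix.trace_mul_comm, hNdef]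
    exact trace_sum_mul _ _ _
  have hA_le : (R * P * R).trace ≤ α * (2 * L) := by
    rw [htrA]
    calc ∑ i, p i * (X' i ⬝ᵥ S₁⁻¹ *ᵥ X' i) ≤ ∑ i, p i * (2 * L) := by
          refine Finset.sum_le_sum fun i _ => ?_
          by_cases h : p i = 0
          · simp [h]
          · exact mul_le_mul_of_nonneg_left (hcross i h) (hp0 i)
      _ = α * (2 * L) := by rw [← Finset.sum_mul]
  have hB_le : (R * N * R).trace ≤ β * L := by
    rw [htrB]
    calc ∑ i, q i * (X i ⬝ᵥ S₁⁻¹ *ᵥ X i) ≤ ∑ i, q i * L := by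
          refine Finset.sum_le_sum fun i _ => ?_
          by_cases h : q i = 0
          · simp [h]
          · exact mul_le_mul_of_nonneg_left (hdirect i h) (hq0 i)
      _ = β * L := by rw [← Finset.sum_mul]
  have hfinal := traceNorm_sub_le hA1 hB1
  rw [← hM1] at hfinal
  refine le_trans hfinal ?_
  have h2ab : 2 * α + β ≤ 4 + 2 * K := by linarith
  have hmul := mul_le_mul_of_nonneg_right h2ab hL0.le
  nlinarith [hA_le, hB_le, hmul]

/-- Weighted Gram matrices of adjacent datasets with bounded leverage and
`ℓ₁`-close weights are positive definite and close in `d_PD`. -/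
theorem dPD_of_bounded_leverage {n d : ℕ} (X X' : Matrix (Fin n) (Fin d) ℝ)
    (L : ℝ) (hL0 : 0 < L) (hL1 : L < 1)
    (hadj : ∃ i₀ : Fin n, ∀ i, i ≠ i₀ → X i = X' i)
    (v w : Fin n → ℝ)
    (hv01 : ∀ i, 0 ≤ v i ∧ v i ≤ 1) (hw01 : ∀ i, 0 ≤ w i ∧ w i ≤ 1)
    (hinvv : IsUnit (Xᵀ * Matrix.diagonal v * X).det)
    (hinvw : IsUnit (X'ᵀ * Matrix.diagonal w * X').det)
    (hlevv : ∀ i, v i ≠ 0 → X i ⬝ᵥ ((Xᵀ * Matrix.diagonal v * X)⁻¹ *ᵥ X i) ≤ L)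
    (hlevw : ∀ i, w i ≠ 0 → X' i ⬝ᵥ ((X'ᵀ * Matrix.diagonal w * X')⁻¹ *ᵥ X' i) ≤ L)
    (hsmall : (1 + ∑ i, |v i - w i|) * L ≤ 1 / 2) :
    (Xᵀ * Matrix.diagonal v * X).PosDef ∧
    (X'ᵀ * Matrix.diagonal w * X').PosDef ∧
    dPD (Xᵀ * Matrix.diagonal v * X) (X'ᵀ * Matrix.diagonal w * X')
      ≤ 2 * (2 + ∑ i, |v i - w i|) * L := by
  obtain ⟨i₀, hadj⟩ := hadj
  refine ⟨posdef_of_gram X v (fun i => (hv01 i).1) hinvv,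
    posdef_of_gram X' w (fun i => (hw01 i).1) hinvw, ?_⟩
  have hsum : ∑ i, |w i - v i| = ∑ i, |v i - w i| :=
    Finset.sum_congr rfl fun i _ => abs_sub_comm _ _
  have h1 := traceNorm_side X X' L hL0 i₀ hadj v w hv01 hw01 hinvv hinvw hlevv hlevw hsmall
  have h2 := traceNorm_side X' X L hL0 i₀ (fun i hi => (hadj i hi).symm) w v hw01 hv01
    hinvw hinvv hlevw hlevv (by rw [hsum]; exact hsmall)
  rw [hsum] at h2
  rw [dPD]
  exact max_le h1 h2
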